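/- Consider the two-spring sweeping process in ℝ³ with n̂₊₁ = (κ, -s₁, 0)ᵀ, κ = 1/√(k₁⁻¹+k₂⁻¹), k₁,k₂ > 0, s₁ > 0, h₁ ∈ ℝ satisfying (k₁⁻¹+k₂⁻¹)(1-h₁)s₁² > -1, and l̇(t) > 0. Then the localized rate (ŷ̇, ȧ₁, ȧ₂)ᵀ = -[1/(1 + (k₁⁻¹+k₂⁻¹)(1-h₁)s₁²)] l̇(t) n̂₊₁ satisfies the consistency condition n̂₊₁ᵀ(ŷ̇ + κ l̇, (1-h₁)ȧ₁, (1-h₂)ȧ₂)ᵀ = 0 with nonnegative multiplier λ = l̇/(1+(k₁⁻¹+k₂⁻¹)(1-h₁)s₁²) ≥ 0, and the second constraint direction satisfies n̂₊₂ᵀ(ŷ̇ + κ l̇, (1-h₁)ȧ₁, (1-h₂)ȧ₂)ᵀ ≤ 0 if and only if h₁ ≥ 1. -/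

import Mathlib

/-- For the two-spring sweeping process in ℝ³, the localized rate
`(ŷ̇,ȧ₁,ȧ₂) = -[1/(1+(k₁⁻¹+k₂⁻¹)(1-h₁)s₁²)] l̇ n̂₊₁` (with `n̂₊₁ = (κ,-s₁,0)`)
satisfies the consistency condition for the first constraint with nonnegative
multiplier `λ = l̇/(1+(k₁⁻¹+k₂⁻¹)(1-h₁)s₁²)`, and the second constraint direction
value is ≤ 0 iff `h₁ ≥ 1`. -/
theorem two_spring_localized_rate (k₁ k₂ s₁ s₂ h₁ h₂ ldot κ D₁ yd a1d a2d : ℝ)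
    (hk₁ : 0 < k₁) (hk₂ : 0 < k₂) (hs₁ : 0 < s₁) (hs₂ : 0 < s₂) (hldot : 0 < ldot)
    (hκ : κ = 1 / Real.sqrt (k₁⁻¹ + k₂⁻¹))
    (hD₁ : D₁ = 1 + (k₁⁻¹ + k₂⁻¹) * (1 - h₁) * s₁ ^ 2)
    (hmod : (k₁⁻¹ + k₂⁻¹) * (1 - h₁) * s₁ ^ 2 > -1)
    (hyd : yd = -(1 / D₁) * ldot * κ)
    (ha1d : a1d = -(1 / D₁) * ldot * (-s₁))
    (ha2d : a2d = 0) :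
    -- consistency of the first (active) constraint
    (κ * (yd + κ * ldot) + (-s₁) * ((1 - h₁) * a1d) + 0 * ((1 - h₂) * a2d) = 0) ∧
    -- nonnegative multiplier: -(rate) = λ n̂₊₁ with λ = l̇/D₁ ≥ 0
    (0 ≤ ldot / D₁ ∧
      -yd = (ldot / D₁) * κ ∧ -a1d = (ldot / D₁) * (-s₁) ∧ -a2d = (ldot / D₁) * 0) ∧
    -- second constraint direction nonincreasing iff h₁ ≥ 1
    ((κ * (yd + κ * ldot) + 0 * ((1 - h₁) * a1d) + (-s₂) * ((1 - h₂) * a2d) ≤ 0) ↔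
      1 ≤ h₁) := by
  set K := k₁⁻¹ + k₂⁻¹ with hK
  have hKpos : 0 < K := by positivity
  have hκ2 : κ ^ 2 = 1 / K := by
    rw [hκ, div_pow, one_pow, Real.sq_sqrt hKpos.le]
  have hDpos : 0 < D₁ := by rw [hD₁]; linarith
  have hDne : D₁ ≠ 0 := hDpos.ne'
  have hKne : K ≠ 0 := hKpos.ne'
  refine ⟨?_, ⟨?_, ?_, ?_, ?_⟩, ?_⟩
  · have : κ * (yd + κ * ldot) + (-s₁) * ((1 - h₁) * a1d) + 0 * ((1 - h₂) * a2d)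
        = (κ ^ 2 * (D₁ - 1) - (1 - h₁) * s₁ ^ 2) * (ldot / D₁) := by
      rw [hyd, ha1d]; field_simp; ring
    rw [this, hκ2, hD₁]
    field_simp
    ring
  · positivity
  · rw [hyd]; ring
  · rw [ha1d]; ring
  · rw [ha2d]; ring
  · have hmain : κ * (yd + κ * ldot) + 0 * ((1 - h₁) * a1d) + (-s₂) * ((1 - h₂) * a2d)
        = (1 - h₁) * s₁ ^ 2 * (ldot / D₁) := by
      rw [hyd, ha1d, ha2d]
      have : κ ^ 2 * (D₁ - 1) = (1 - h₁) * s₁ ^ 2 := by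
        rw [hκ2, hD₁]; field_simp; ring
      field_simp
      nlinarith [this]
    rw [hmain]
    have hpos : 0 < s₁ ^ 2 * (ldot / D₁) := by positivity
    constructor
    · intro h
      nlinarith
    · intro h
      nlinarith
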